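/- Renaming preserves satisfiability (one step of the SNF translation): let R_1, …, R_m and A be PLTL formulae, x a proposition symbol, and σ a model with (σ,0) ⊨ (⋀_{h=1}^{m} □R_h) ∧ □(x ⇒ □A). Let y be a proposition symbol occurring in none of the R_h, in x, or in A. Then there is a model σ′ that agrees with σ on all proposition symbols other than y and satisfies (σ′,0) ⊨ (⋀_{h=1}^{m} □R_h) ∧ □(x ⇒ □y) ∧ □(y ⇒ A). -/
import Mathlib


/-- Syntax of Propositional Linear Temporal Logic over proposition symbols `P`. -/
inductive PLTL (P : Type) : Type
  | tru : PLTL P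
  | fls : PLTL P
  | start : PLTL P
  | atom : P → PLTL P
  | neg : PLTL P → PLTL P
  | conj : PLTL P → PLTL P → PLTL P
  | disj : PLTL P → PLTL P → PLTL P
  | impl : PLTL P → PLTL P → PLTL P
  | next : PLTL P → PLTL P
  | evtl : PLTL P → PLTL P
  | alw : PLTL P → PLTL P
  | untl : PLTL P → PLTL P → PLTL P
  | unls : PLTL P → PLTL P → PLTL P

namespace PLTL

/-- Satisfaction `(σ, i) ⊨ A` of a PLTL formula in a model `σ : ℕ → Set P` at index `i`. -/
def Sat {P : Type} (σ : ℕ → Set P) : PLTL P → ℕ → Prop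
  | tru, _ => True
  | fls, _ => False
  | start, i => i = 0
  | atom p, i => p ∈ σ i
  | neg A, i => ¬ Sat σ A i
  | conj A B, i => Sat σ A i ∧ Sat σ B i
  | disj A B, i => Sat σ A i ∨ Sat σ B i
  | impl A B, i => Sat σ A i → Sat σ B i
  | next A, i => Sat σ A (i + 1)
  | evtl A, i => ∃ k, i ≤ k ∧ Sat σ A k
  | alw A, i => ∀ j, i ≤ j → Sat σ A j
  | untl A B, i => ∃ k, i ≤ k ∧ Sat σ B k ∧ ∀ j, i ≤ j → j < k → Sat σ A j
  | unls A B, i =>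
      (∃ k, i ≤ k ∧ Sat σ B k ∧ ∀ j, i ≤ j → j < k → Sat σ A j) ∨ (∀ j, i ≤ j → Sat σ A j)

/-- A formula is valid iff it is satisfied at index 0 of every model. -/
def Valid {P : Type} (A : PLTL P) : Prop := ∀ σ : ℕ → Set P, Sat σ A 0

/-- A formula with no temporal connectives is propositionally valid iff
it is satisfied at every index of every model. -/
def PropValid {P : Type} (A : PLTL P) : Prop := ∀ (σ : ℕ → Set P) (i : ℕ), Sat σ A i

/-- A literal is a proposition symbol or a negated proposition symbol. -/
def IsLiteral {P : Type} : PLTL P → Prop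
  | atom _ => True
  | neg (atom _) => True
  | _ => False

/-- A conjunction of literals. -/
def IsConjLits {P : Type} : PLTL P → Prop
  | atom _ => True
  | neg (atom _) => True
  | conj A B => IsConjLits A ∧ IsConjLits B
  | _ => False

/-- Biconditional `A ⇔ B` as an abbreviation. -/
def piff {P : Type} (A B : PLTL P) : PLTL P := conj (impl A B) (impl B A)

/-- Finite disjunction. -/
def bigOr {P : Type} (l : List (PLTL P)) : PLTL P := l.foldr disj fls

/-- Finite conjunction. -/
def bigAnd {P : Type} (l : List (PLTL P)) : PLTL P := l.foldr conj tru

/-- The proposition symbols occurring in a formula. -/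
def syms {P : Type} : PLTL P → Set P
  | tru => ∅
  | fls => ∅
  | start => ∅
  | atom p => {p}
  | neg A => syms A
  | conj A B => syms A ∪ syms B
  | disj A B => syms A ∪ syms B
  | impl A B => syms A ∪ syms B
  | next A => syms A
  | evtl A => syms A
  | alw A => syms A
  | untl A B => syms A ∪ syms B
  | unls A B => syms A ∪ syms B

end PLTL


open PLTL in
theorem sat_congr {P : Type} (σ σ' : ℕ → Set P) (A : PLTL P)
    (h : ∀ i p, p ∈ syms A → (p ∈ σ i ↔ p ∈ σ' i)) :
    ∀ i, Sat σ A i ↔ Sat σ' A i := by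
  induction A with
  | tru => intro i; rfl
  | fls => intro i; rfl
  | start => intro i; rfl
  | atom p => intro i; exact h i p rfl
  | neg A ih =>
      intro i
      exact not_congr (ih (fun i p hp => h i p hp) i)
  | conj A B ihA ihB =>
      intro i
      exact and_congr (ihA (fun i p hp => h i p (Or.inl hp)) i)
        (ihB (fun i p hp => h i p (Or.inr hp)) i)
  | disj A B ihA ihB =>
      intro i
      exact or_congr (ihA (fun i p hp => h i p (Or.inl hp)) i)
        (ihB (fun i p hp => h i p (Or.inr hp)) i)
  | impl A B ihA ihB =>
      intro i
      exact imp_congr (ihA (fun i p hp => h i p (Or.inl hp)) i)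
        (ihB (fun i p hp => h i p (Or.inr hp)) i)
  | next A ih => intro i; exact ih h (i+1)
  | evtl A ih =>
      intro i
      exact exists_congr fun k => and_congr Iff.rfl (ih h k)
  | alw A ih =>
      intro i
      exact forall_congr' fun j => imp_congr Iff.rfl (ih h j)
  | untl A B ihA ihB =>
      intro i
      refine exists_congr fun k => and_congr Iff.rfl (and_congr
        (ihB (fun i p hp => h i p (Or.inr hp)) k)
        (forall_congr' fun j => imp_congr Iff.rfl (imp_congr Iff.rfl
          (ihA (fun i p hp => h i p (Or.inl hp)) j))))
  | unls A B ihA ihB =>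
      intro i
      refine or_congr
        (exists_congr fun k => and_congr Iff.rfl (and_congr
          (ihB (fun i p hp => h i p (Or.inr hp)) k)
          (forall_congr' fun j => imp_congr Iff.rfl (imp_congr Iff.rfl
            (ihA (fun i p hp => h i p (Or.inl hp)) j)))))
        (forall_congr' fun j => imp_congr Iff.rfl
          (ihA (fun i p hp => h i p (Or.inl hp)) j))

open PLTL in
/-- renaming preserves satisfiability (one step of the SNF translation,
for the case x ⇒ □A with A renamed by a fresh proposition symbol y). -/
theorem stmt_17 {P : Type} [Countable P] (m : ℕ) (R : Fin m → PLTL P) (x : P)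
    (A : PLTL P) (σ : ℕ → Set P) (y : P)
    (hyR : ∀ h : Fin m, y ∉ syms (R h)) (hyx : y ≠ x) (hyA : y ∉ syms A)
    (hσ : (∀ h : Fin m, Sat σ (alw (R h)) 0) ∧
          Sat σ (alw (impl (atom x) (alw A))) 0) :
    ∃ σ' : ℕ → Set P,
      (∀ (i : ℕ) (p : P), p ≠ y → (p ∈ σ' i ↔ p ∈ σ i)) ∧
      (∀ h : Fin m, Sat σ' (alw (R h)) 0) ∧
      Sat σ' (alw (impl (atom x) (alw (atom y)))) 0 ∧
      Sat σ' (alw (impl (atom y) A)) 0 := by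
  
  classical
  set σ' : ℕ → Set P := fun i => (σ i \ {y}) ∪ {q | q = y ∧ ∃ j ≤ i, x ∈ σ j} with hσ'def
  have hagree : ∀ i p, p ≠ y → (p ∈ σ' i ↔ p ∈ σ i) := by
    intro i p hp
    simp only [hσ'def, Set.mem_union, Set.mem_setOf_eq, Set.mem_diff, Set.mem_singleton_iff]
    constructor
    · rintro (⟨h, _⟩ | ⟨rfl, _⟩)
      · exact h
      · exact absurd rfl hp
    · exact fun h => Or.inl ⟨h, hp⟩
  have hcongr : ∀ (B : PLTL P), y ∉ syms B → ∀ i, Sat σ B i ↔ Sat σ' B i := by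
    intro B hB i
    exact sat_congr σ σ' B (fun i p hp => by
      by_cases hpy : p = y
      · exact absurd (hpy ▸ hp) hB
      · exact (hagree i p hpy).symm) i
  have hymem : ∀ i, y ∈ σ' i ↔ ∃ j ≤ i, x ∈ σ j := by
    intro i
    simp only [hσ'def, Set.mem_union, Set.mem_setOf_eq, true_and, Set.mem_diff,
      Set.mem_singleton_iff]
    constructor
    · rintro (⟨_, h⟩ | h)
      · exact absurd trivial h
      · exact h
    · exact Or.inr
  refine ⟨σ', hagree, ?_, ?_, ?_⟩
  · intro h j hj
    exact (hcongr (R h) (hyR h) j).mp (hσ.1 h j hj)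
  · intro j _ hx k hk
    have hxσ : x ∈ σ j := (hagree j x hyx.symm).mp hx
    exact (hymem k).mpr ⟨j, hk, hxσ⟩
  · intro j _ hy
    obtain ⟨k, hk, hxk⟩ := (hymem j).mp hy
    exact (hcongr A hyA j).mp (hσ.2 k (Nat.zero_le k) hxk j hk)
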